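/- (Wolf–Ziv decomposition) For jointly distributed X in R^n, Y in R^p with E||Y||^2 < ∞, and any integer k ≥ 1, inf over k-ary quantizers q : R^n → {1,...,k} and reconstruction maps f : {1,...,k} → R^p of E||Y - f(q(X))||^2 equals E||Y - E[Y|X]||^2 plus inf over k-ary quantizers q of E||E[Y|X] - E[Y|q(X)]||^2. -/

import Mathlib

open MeasureTheory
open scoped RealInnerProductSpace

section Aux

variable {Ω : Type*} {p : ℕ}

local notation "E" => EuclideanSpace ℝ (Fin p)

/-- L² norm squared as an integral. -/
lemma integral_norm_sq_eq [MeasurableSpace Ω] {μ : Measure Ω} (F : Lp E 2 μ) :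
    ∫ ω, ‖F ω‖ ^ 2 ∂μ = ‖F‖ ^ 2 := by
  have h := MeasureTheory.L2.inner_def (𝕜 := ℝ) F F
  rw [real_inner_self_eq_norm_sq] at h
  rw [h]
  congr 1
  ext ω
  rw [real_inner_self_eq_norm_sq]

lemma integral_norm_sq_sub_eq [MeasurableSpace Ω] {μ : Measure Ω} {F G : Lp E 2 μ} {u v : Ω → E}
    (hu : u =ᵐ[μ] F) (hv : v =ᵐ[μ] G) :
    ∫ ω, ‖u ω - v ω‖ ^ 2 ∂μ = ‖F - G‖ ^ 2 := by
  rw [← integral_norm_sq_eq (F - G)]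
  apply integral_congr_ae
  filter_upwards [hu, hv, Lp.coeFn_sub F G] with ω h1 h2 h3
  rw [h3, Pi.sub_apply, h1, h2]

/-- condexp agrees a.e. with condexpL2. -/
lemma condexp_ae_eq_condexpL2 {m m0 : MeasurableSpace Ω} {μ : Measure Ω}
    [IsProbabilityMeasure μ] (hm : m ≤ m0)
    {Y : Ω → E} (hY2 : MemLp Y 2 μ) :
    μ[Y|m] =ᵐ[μ] (condExpL2 E ℝ hm (hY2.toLp Y) : Lp E 2 μ) := by
  refine (ae_eq_condExp_of_forall_setIntegral_eq hm (hY2.integrable one_le_two)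
    (fun s hs hμs => integrableOn_condExpL2_of_measure_ne_top hm hμs.ne _)
    (fun s hs hμs => ?_)
    (lpMeas.aestronglyMeasurable _)).symm
  rw [integral_condExpL2_eq hm (hY2.toLp Y) hs hμs.ne]
  exact setIntegral_congr_ae (hm s hs) ((hY2.coeFn_toLp).mono fun ω h _ => h)

set_option synthInstance.maxHeartbeats 1000000 in
set_option maxHeartbeats 1000000 in
/-- Pythagoras decomposition for conditional expectation in L². -/
lemma pythag {m m0 : MeasurableSpace Ω} {μ : Measure Ω} [IsProbabilityMeasure μ] (hm : m ≤ m0)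
    {Y W : Ω → E} (hY2 : MemLp Y 2 μ) (hW2 : MemLp W 2 μ)
    (hWm : AEStronglyMeasurable[m] W μ) :
    ∫ ω, ‖Y ω - W ω‖ ^ 2 ∂μ
      = ∫ ω, ‖Y ω - (μ[Y|m]) ω‖ ^ 2 ∂μ + ∫ ω, ‖(μ[Y|m]) ω - W ω‖ ^ 2 ∂μ := by
  haveI : Fact (m ≤ m0) := ⟨hm⟩
  set Yl : Lp E 2 μ := hY2.toLp Y with hYl
  set Wl : Lp E 2 μ := hW2.toLp W with hWl
  set P : Lp E 2 μ := (condExpL2 E ℝ hm Yl : Lp E 2 μ) with hP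
  have hZ : μ[Y|m] =ᵐ[μ] P := condexp_ae_eq_condexpL2 hm hY2
  have hPmem : P ∈ lpMeas E ℝ m 2 μ := (condExpL2 E ℝ hm Yl).2
  have hWmem : Wl ∈ lpMeas E ℝ m 2 μ :=
    mem_lpMeas_iff_aestronglyMeasurable.mpr (hWm.congr (hW2.coeFn_toLp).symm)
  have horth0 := Submodule.starProjection_inner_eq_zero (K := lpMeas E ℝ m 2 μ) Yl (P - Wl)
    (Submodule.sub_mem _ hPmem hWmem)
  have horth : ⟪Yl - P, P - Wl⟫ = (0 : ℝ) := horth0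
  have hnorm : ‖Yl - Wl‖ ^ 2 = ‖Yl - P‖ ^ 2 + ‖P - Wl‖ ^ 2 := by
    calc ‖Yl - Wl‖ ^ 2 = ‖(Yl - P) + (P - Wl)‖ ^ 2 := by rw [sub_add_sub_cancel]
      _ = ‖Yl - P‖ ^ 2 + 2 * ⟪Yl - P, P - Wl⟫ + ‖P - Wl‖ ^ 2 := norm_add_sq_real _ _
      _ = ‖Yl - P‖ ^ 2 + ‖P - Wl‖ ^ 2 := by rw [horth]; ring
  have e1 := integral_norm_sq_sub_eq (hY2.coeFn_toLp.symm) (hW2.coeFn_toLp.symm)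
  have e2 := integral_norm_sq_sub_eq (hY2.coeFn_toLp.symm) hZ
  have e3 := integral_norm_sq_sub_eq hZ (hW2.coeFn_toLp.symm)
  rw [e1, e2, e3, hnorm]

/-- Doob–Dynkin style factorization through a `Fin k`-valued map. -/
lemma exists_factor {k : ℕ} {T : Ω → Fin k} {g : Ω → E}
    (hg : Measurable[MeasurableSpace.comap T inferInstance] g) :
    ∃ f : Fin k → E, ∀ ω, g ω = f (T ω) := by
  classical
  have hconst : ∀ ω ω', T ω = T ω' → g ω = g ω' := by
    intro ω ω' hT
    have hs : MeasurableSet[MeasurableSpace.comap T inferInstance] (g ⁻¹' {g ω}) :=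
      hg (measurableSet_singleton (g ω))
    obtain ⟨t, -, ht⟩ := hs
    have hω : ω ∈ T ⁻¹' t := by rw [ht]; exact Set.mem_preimage.mpr rfl
    have hω' : ω' ∈ T ⁻¹' t := by simpa [Set.mem_preimage, ← hT] using hω
    have h2 := (by rw [ht] at hω'; exact hω' : ω' ∈ g ⁻¹' {g ω})
    simpa [eq_comm] using h2
  refine ⟨fun i => if h : ∃ ω, T ω = i then g h.choose else 0, fun ω => ?_⟩
  have h : ∃ ω', T ω' = T ω := ⟨ω, rfl⟩
  simp only [dif_pos h]
  exact hconst ω h.choose h.choose_spec.symm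

lemma memℒp_comp_fin {k : ℕ} [Nonempty (Fin k)] {m0 : MeasurableSpace Ω} {μ : Measure Ω}
    [IsFiniteMeasure μ]
    {T : Ω → Fin k} (hT : Measurable T) (f : Fin k → E) :
    MemLp (fun ω => f (T ω)) 2 μ := by
  refine MemLp.of_bound ((measurable_of_countable f).comp hT).aestronglyMeasurable
    (Finset.univ.sup' Finset.univ_nonempty fun i => ‖f i‖) ?_
  exact Filter.Eventually.of_forall fun ω =>
    Finset.le_sup' (fun i => ‖f i‖) (Finset.mem_univ (T ω))

end Aux

lemma sm_comp_fin {Ω : Type*} {p k : ℕ} (T : Ω → Fin k) (f : Fin k → EuclideanSpace ℝ (Fin p)) :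
    StronglyMeasurable[MeasurableSpace.comap T inferInstance] (fun ω => f (T ω)) :=
  Measurable.stronglyMeasurable
    ((measurable_of_countable f).comp (Measurable.of_comap_le le_rfl))

set_option maxHeartbeats 1000000 in
/-- Wolf–Ziv decomposition: the minimum quantized MSE over k-ary quantizer /
reconstruction pairs equals the unquantized MMSE plus the MMSE regret. -/
theorem stmt1 {Ω : Type*} [MeasurableSpace Ω] (μ : Measure Ω) [IsProbabilityMeasure μ]
    {n p k : ℕ} (hk : 0 < k)
    (X : Ω → EuclideanSpace ℝ (Fin n)) (Y : Ω → EuclideanSpace ℝ (Fin p))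
    (hX : Measurable X) (hY : Measurable Y) (hY2 : MemLp Y 2 μ) :
    (⨅ q : {q : EuclideanSpace ℝ (Fin n) → Fin k // Measurable q},
      ⨅ f : Fin k → EuclideanSpace ℝ (Fin p),
        ∫ ω, ‖Y ω - f (q.1 (X ω))‖ ^ 2 ∂μ)
    = (∫ ω, ‖Y ω - (μ[Y | MeasurableSpace.comap X inferInstance]) ω‖ ^ 2 ∂μ)
      + ⨅ q : {q : EuclideanSpace ℝ (Fin n) → Fin k // Measurable q},
          ∫ ω, ‖(μ[Y | MeasurableSpace.comap X inferInstance]) ω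
            - (μ[Y | MeasurableSpace.comap (fun ω => q.1 (X ω)) inferInstance]) ω‖ ^ 2 ∂μ := by
  classical
  haveI : Nonempty (Fin k) := ⟨⟨0, hk⟩⟩
  haveI hne : Nonempty {q : EuclideanSpace ℝ (Fin n) → Fin k // Measurable q} :=
    ⟨⟨fun _ => ⟨0, hk⟩, measurable_const⟩⟩
  have hm : MeasurableSpace.comap X inferInstance ≤ _ := hX.comap_le
  set m := MeasurableSpace.comap X inferInstance with hm_def
  set Z := μ[Y|m] with hZ_def
  have hZ2 : MemLp Z 2 μ := (Lp.memLp _).ae_eq (condexp_ae_eq_condexpL2 hm hY2).symm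
  set A := ∫ ω, ‖Y ω - Z ω‖ ^ 2 ∂μ with hA_def
  set B : {q : EuclideanSpace ℝ (Fin n) → Fin k // Measurable q} → ℝ :=
    fun q => ∫ ω, ‖Z ω
      - (μ[Y | MeasurableSpace.comap (fun ω => q.1 (X ω)) inferInstance]) ω‖ ^ 2 ∂μ with hB_def
  have key : ∀ q : {q : EuclideanSpace ℝ (Fin n) → Fin k // Measurable q},
      (⨅ f : Fin k → EuclideanSpace ℝ (Fin p),
        ∫ ω, ‖Y ω - f (q.1 (X ω))‖ ^ 2 ∂μ) = A + B q := by
    intro q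
    have hqX := q.2.comp hX
    have hmq := hqX.comap_le
    set mq := MeasurableSpace.comap (fun ω => q.1 (X ω)) inferInstance with hmq_def
    have hmqm : mq ≤ m := by
      rw [hmq_def, hm_def]
      have h1 : MeasurableSpace.comap (fun ω => q.1 (X ω)) inferInstance
          = MeasurableSpace.comap X (MeasurableSpace.comap q.1 inferInstance) :=
        (MeasurableSpace.comap_comp).symm
      rw [h1]
      exact MeasurableSpace.comap_mono q.2.comap_le
    set Zq := μ[Y|mq] with hZq_def
    have htower : μ[Z|mq] =ᵐ[μ] Zq := condExp_condExp_of_le hmqm hm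
    have hdecomp : ∀ f : Fin k → EuclideanSpace ℝ (Fin p),
        ∫ ω, ‖Y ω - f (q.1 (X ω))‖ ^ 2 ∂μ
          = A + (∫ ω, ‖Z ω - Zq ω‖ ^ 2 ∂μ)
            + ∫ ω, ‖Zq ω - f (q.1 (X ω))‖ ^ 2 ∂μ := by
      intro f
      have hW2 : MemLp (fun ω => f (q.1 (X ω))) 2 μ := memℒp_comp_fin (μ := μ) hqX f
      have hWsm : StronglyMeasurable[mq] (fun ω => f (q.1 (X ω))) :=
        sm_comp_fin (fun ω => q.1 (X ω)) f
      have hWm' : AEStronglyMeasurable[m] (fun ω => f (q.1 (X ω))) μ :=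
        (hWsm.mono hmqm).aestronglyMeasurable
      have hWmq' : AEStronglyMeasurable[mq] (fun ω => f (q.1 (X ω))) μ :=
        hWsm.aestronglyMeasurable
      have h1 : ∫ ω, ‖Y ω - f (q.1 (X ω))‖ ^ 2 ∂μ
          = (∫ ω, ‖Y ω - Z ω‖ ^ 2 ∂μ) + ∫ ω, ‖Z ω - f (q.1 (X ω))‖ ^ 2 ∂μ :=
        pythag hm hY2 hW2 hWm'
      have h2 : ∫ ω, ‖Z ω - f (q.1 (X ω))‖ ^ 2 ∂μ
          = (∫ ω, ‖Z ω - (μ[Z|mq]) ω‖ ^ 2 ∂μ)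
            + ∫ ω, ‖(μ[Z|mq]) ω - f (q.1 (X ω))‖ ^ 2 ∂μ :=
        pythag hmq hZ2 hW2 hWmq'
      have h3 : ∫ ω, ‖Z ω - (μ[Z|mq]) ω‖ ^ 2 ∂μ = ∫ ω, ‖Z ω - Zq ω‖ ^ 2 ∂μ :=
        integral_congr_ae (htower.mono fun ω hω => by dsimp only; rw [hω])
      have h4 : ∫ ω, ‖(μ[Z|mq]) ω - f (q.1 (X ω))‖ ^ 2 ∂μ
          = ∫ ω, ‖Zq ω - f (q.1 (X ω))‖ ^ 2 ∂μ :=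
        integral_congr_ae (htower.mono fun ω hω => by dsimp only; rw [hω])
      rw [h1, h2, h3, h4, ← hA_def, add_assoc]
    have hnn : ∀ f : Fin k → EuclideanSpace ℝ (Fin p),
        (0:ℝ) ≤ ∫ ω, ‖Y ω - f (q.1 (X ω))‖ ^ 2 ∂μ :=
      fun f => integral_nonneg fun ω => by positivity
    obtain ⟨f₀, hf₀⟩ := exists_factor
      ((stronglyMeasurable_condExp (m := mq)).measurable : Measurable[mq] Zq)
    have hBq : B q = ∫ ω, ‖Z ω - Zq ω‖ ^ 2 ∂μ := rfl
    have hattain : ∫ ω, ‖Y ω - f₀ (q.1 (X ω))‖ ^ 2 ∂μ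
        = A + ∫ ω, ‖Z ω - Zq ω‖ ^ 2 ∂μ := by
      rw [hdecomp f₀]
      have hz : ∫ ω, ‖Zq ω - f₀ (q.1 (X ω))‖ ^ 2 ∂μ = 0 := by
        have hz0 : ∀ ω, ‖Zq ω - f₀ (q.1 (X ω))‖ ^ 2 = 0 := fun ω => by
          rw [← hf₀ ω]; simp [hZq_def]
        simp [hz0]
      rw [hz, add_zero]
    rw [hBq]
    apply le_antisymm
    · refine (ciInf_le ⟨0, ?_⟩ f₀).trans (le_of_eq hattain)
      rintro x ⟨f, rfl⟩
      exact hnn f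
    · refine le_ciInf fun f => ?_
      rw [hdecomp f]
      have h5 : (0:ℝ) ≤ ∫ ω, ‖Zq ω - f (q.1 (X ω))‖ ^ 2 ∂μ :=
        integral_nonneg fun ω => by positivity
      linarith
  refine (iInf_congr key).trans ?_
  have hBnn : ∀ q, (0:ℝ) ≤ B q := fun q => integral_nonneg fun ω => by positivity
  have hBdd : BddBelow (Set.range B) := by
    refine ⟨0, ?_⟩
    rintro x ⟨q, rfl⟩
    exact hBnn q
  have hBdd' : BddBelow (Set.range fun q => A + B q) := by
    refine ⟨A, ?_⟩
    rintro x ⟨q, rfl⟩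
    exact le_add_of_nonneg_right (hBnn q)
  apply le_antisymm
  · have h1 : ∀ q, (⨅ q, A + B q) - A ≤ B q := fun q => by
      have h2 := ciInf_le hBdd' q
      have h3 : (⨅ q, A + B q) ≤ A + B q := h2
      linarith
    have h2 : (⨅ q, A + B q) - A ≤ ⨅ q, B q := le_ciInf h1
    linarith
  · exact le_ciInf fun q => add_le_add_right (ciInf_le hBdd q) A
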